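/- Let θ > 0 and let a₂, a₃, a₄, a₅, a_{211}, a_{2111} be real numbers. Define a_{41} = a₄ − a₅, a_{221} = (1/5)a₂ − (4/5)a₃ + a₄ + (1/5)a_{211} − (2/5)a_{2111} − (2/5)a₅, a_{311} = (3/5)a_{211} − (2/5)a₂ + (8/5)a₃ − 2a₄ − (1/5)a_{2111} + (4/5)a₅, a_{32} = −(3/5)a₃ + (1/5)a_{2111} + (1/5)a₅ − (3/5)a_{211} + (2/5)a₂. Then: (i) 10a_{2111} + 15a_{221} + 10a_{311} + 10a_{32} + 5a_{41} + a₅ = 4a_{2111} + 3a₂ − 2a₃ + 3a_{211}; and (ii) with m₁ = 1/2, m₂ = (2a₂ + θ)/(4(a₂ + θ)), m₃ = (4a₂ + θ)/(8(a₂ + θ)), m₄ = (θ² − 4a₃θ + 10a₂θ + 2a₄θ + 12a_{211}a₂ + 12a₂² − 8a₃a₂)/(8(3a_{211} + 3a₂ − 2a₃ + 2θ)(a₂ + θ)), and provided a₂ + θ > 0, 3a_{211} + 3a₂ − 2a₃ + 2θ > 0 and 4a_{2111} + 3a₂ − 2a₃ + 3a_{211} + (5/2)θ > 0, one has (a₅·m₁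 + (10a_{32} + 5a_{41})·m₂ + (15a_{221} + 10a_{311})·m₃ + (10a_{2111} + (5/4)θ)·m₄) / (10a_{2111} + 15a_{221} + 10a_{311} + 10a_{32} + 5a_{41} + a₅ + (5/2)θ) = ((θ − 6a_{211} + 10a₄ + 20a₂ − 16a₃)·θ − 16a₃a₂ + 24a₂² + 24a_{211}a₂) / (16·(a₂ + θ)·(3a_{211} + 3a₂ − 2a₃ + 2θ)). -/

import Mathlib

/-- Fifth moment of the invariant measure of a `(Ξ,A)`-Fleming-Viot process on a two-point
type space with symmetric parent-independent mutation (`α = 1/2`, so `(5/2)θα = (5/4)θ`).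
Here `a₂ = β_{2;2;0}+σ²`, `a₃ = β_{3;3;0}`, `a₄ = β_{4;4;0}`, `a₅ = β_{5;5;0}`,
`a_{211} = β_{4;2;2}+σ²`, `a_{2111} = β_{5;2;3}+σ²`, `a_{41} = β_{5;4;1}`,
`a_{221} = β_{5;2,2;1}`, `a_{311} = β_{5;3;2}`, `a_{32} = β_{5;3,2;0}`, and the displayed
linear relations are the consistency conditions for the coalescence rates. -/
theorem fifth_moment_formula
    (θ a₂ a₃ a₄ a₅ a211 a2111 a41 a221 a311 a32 m₁ m₂ m₃ m₄ : ℝ)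
    (hθ : 0 < θ)
    (ha41 : a41 = a₄ - a₅)
    (ha221 : a221 = (1/5) * a₂ - (4/5) * a₃ + a₄ + (1/5) * a211 - (2/5) * a2111 - (2/5) * a₅)
    (ha311 : a311 = (3/5) * a211 - (2/5) * a₂ + (8/5) * a₃ - 2 * a₄ - (1/5) * a2111 + (4/5) * a₅)
    (ha32 : a32 = -(3/5) * a₃ + (1/5) * a2111 + (1/5) * a₅ - (3/5) * a211 + (2/5) * a₂)
    (hm₁ : m₁ = 1 / 2)
    (hm₂ : m₂ = (2 * a₂ + θ) / (4 * (a₂ + θ)))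
    (hm₃ : m₃ = (4 * a₂ + θ) / (8 * (a₂ + θ)))
    (hm₄ : m₄ = (θ ^ 2 - 4 * a₃ * θ + 10 * a₂ * θ + 2 * a₄ * θ + 12 * a211 * a₂ +
        12 * a₂ ^ 2 - 8 * a₃ * a₂) /
      (8 * (3 * a211 + 3 * a₂ - 2 * a₃ + 2 * θ) * (a₂ + θ))) :
    10 * a2111 + 15 * a221 + 10 * a311 + 10 * a32 + 5 * a41 + a₅ =
      4 * a2111 + 3 * a₂ - 2 * a₃ + 3 * a211 ∧
    (0 < a₂ + θ → 0 < 3 * a211 + 3 * a₂ - 2 * a₃ + 2 * θ →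
      0 < 4 * a2111 + 3 * a₂ - 2 * a₃ + 3 * a211 + (5/2) * θ →
      (a₅ * m₁ + (10 * a32 + 5 * a41) * m₂ + (15 * a221 + 10 * a311) * m₃ +
          (10 * a2111 + (5/4) * θ) * m₄) /
        (10 * a2111 + 15 * a221 + 10 * a311 + 10 * a32 + 5 * a41 + a₅ + (5/2) * θ) =
      ((θ - 6 * a211 + 10 * a₄ + 20 * a₂ - 16 * a₃) * θ - 16 * a₃ * a₂ + 24 * a₂ ^ 2 +
          24 * a211 * a₂) /
        (16 * (a₂ + θ) * (3 * a211 + 3 * a₂ - 2 * a₃ + 2 * θ))) := by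
  subst ha41 ha221 ha311 ha32 hm₁ hm₂ hm₃ hm₄
  refine ⟨by ring, fun h1 h2 h3 => ?_⟩
  have h1' : a₂ + θ ≠ 0 := ne_of_gt h1
  have h2' : 3 * a211 + 3 * a₂ - 2 * a₃ + 2 * θ ≠ 0 := ne_of_gt h2
  have hden : 10 * a2111 +
      15 * ((1/5) * a₂ - (4/5) * a₃ + a₄ + (1/5) * a211 - (2/5) * a2111 - (2/5) * a₅) +
      10 * ((3/5) * a211 - (2/5) * a₂ + (8/5) * a₃ - 2 * a₄ - (1/5) * a2111 + (4/5) * a₅) +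
      10 * (-(3/5) * a₃ + (1/5) * a2111 + (1/5) * a₅ - (3/5) * a211 + (2/5) * a₂) +
      5 * (a₄ - a₅) + a₅ + (5/2) * θ =
      4 * a2111 + 3 * a₂ - 2 * a₃ + 3 * a211 + (5/2) * θ := by ring
  rw [hden, div_eq_div_iff (ne_of_gt h3) (by positivity)]
  field_simp
  have h2'' : 3 * (a211 + a₂) - 2 * a₃ + 2 * θ ≠ 0 := by intro h; apply h2'; linarith
  field_simp
  ring
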